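/- Assume n ≥ 2 and N ≥ 2, and let α_λ ∈ ℂ be given for every partition λ ∈ P_ℓ° and every ℓ with 2 ≤ ℓ ≤ N. Define α_{1^ℓ} ∈ ℂ recursively for ℓ = 2, …, N by α_{1^ℓ} := − Σ_{j=2}^{ℓ} Σ_{λ ∈ P_j°} α_λ · a(λ, ℓ − j). Then one has the identity Σ_{ℓ=2}^{N} Σ_{λ ∈ P_ℓ} α_λ f_λ = Σ_{ℓ=2}^{N} Σ_{λ ∈ P_ℓ°} α_λ F*_{λ, N+1−ℓ} in ℂ⟦t⟧ (no hypotheses on the higher coefficients of the f_i are needed). -/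

import Mathlib

open scoped Classical

/-- `FstarM f λ r` is the series `F*_{λ,r}` for a partition `λ` given as a multiset
of parts: `F*_{λ,0} = f_λ` (the product of `f_i` over the parts `i` of `λ`) and
`F*_{λ,r} = F*_{λ,r−1} − a(λ,r−1)·f₁^{i_λ+r−1}`, where `a(λ,r)` is the coefficient
of `t^{2(i_λ+r)}` in `F*_{λ,r}`. -/
noncomputable def FstarM (f : ℕ → PowerSeries ℂ) (lam : Multiset ℕ) : ℕ → PowerSeries ℂ
  | 0 => (lam.map f).prod
  | r + 1 =>
      FstarM f lam r -
        PowerSeries.C (R := ℂ) (PowerSeries.coeff (R := ℂ) (2 * (lam.sum + r)) (FstarM f lam r)) *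
          f 1 ^ (lam.sum + r)

lemma FstarM_eq (f : ℕ → PowerSeries ℂ) (lam : Multiset ℕ) (r : ℕ) :
    FstarM f lam r = (lam.map f).prod -
      ∑ k ∈ Finset.range r,
        PowerSeries.C (R := ℂ) (PowerSeries.coeff (R := ℂ) (2 * (lam.sum + k)) (FstarM f lam k)) *
          f 1 ^ (lam.sum + k) := by
  induction r with
  | zero => simp [FstarM]
  | succ r ih =>
      rw [FstarM, Finset.sum_range_succ, ih]
      ring

/-- The partition of `ℓ` with all parts equal to `1`. -/
def onesPartition (ℓ : ℕ) : Nat.Partition ℓ :=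
  ⟨Multiset.replicate ℓ 1, by
    intro i hi
    rw [Multiset.eq_of_mem_replicate hi]; norm_num, by simp⟩

/-- with `n ≥ 2`, `N ≥ 2` and coefficients `α_λ ∈ ℂ` given for
`λ ∈ P_ℓ°` (`2 ≤ ℓ ≤ N`), if the coefficients `α_{1^ℓ}` are chosen recursively by
`α_{1^ℓ} = − Σ_{j=2}^{ℓ} Σ_{λ ∈ P_j°} α_λ · a(λ, ℓ−j)`, then
`Σ_{ℓ=2}^{N} Σ_{λ ∈ P_ℓ} α_λ f_λ = Σ_{ℓ=2}^{N} Σ_{λ ∈ P_ℓ°} α_λ F*_{λ, N+1−ℓ}`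
in `ℂ⟦t⟧`. Here `P_ℓ` is the set of partitions of `ℓ` with all parts in `{1,…,n}`
and `P_ℓ° = P_ℓ \ {1^ℓ}`. -/
theorem stmt_14 (n N : ℕ) (hn : 2 ≤ n) (hN : 2 ≤ N) (f : ℕ → PowerSeries ℂ)
    (hlead : ∀ i, 1 ≤ i → i ≤ n → PowerSeries.coeff (R := ℂ) (2 * i) (f i) = 1)
    (hlow : ∀ i, 1 ≤ i → i ≤ n → ∀ m, m < 2 * i → PowerSeries.coeff (R := ℂ) m (f i) = 0)
    (α : Multiset ℕ → ℂ)
    (hα : ∀ ℓ ∈ Finset.Icc 2 N,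
      α (Multiset.replicate ℓ 1) =
        - ∑ j ∈ Finset.Icc 2 ℓ,
            ∑ p ∈ Finset.univ.filter
              (fun p : Nat.Partition j =>
                (∀ k ∈ p.parts, k ≤ n) ∧ p.parts ≠ Multiset.replicate j 1),
              α p.parts * PowerSeries.coeff (R := ℂ) (2 * ℓ) (FstarM f p.parts (ℓ - j))) :
    ∑ ℓ ∈ Finset.Icc 2 N,
        ∑ p ∈ Finset.univ.filter (fun p : Nat.Partition ℓ => ∀ k ∈ p.parts, k ≤ n),
          PowerSeries.C (R := ℂ) (α p.parts) * (p.parts.map f).prod =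
      ∑ ℓ ∈ Finset.Icc 2 N,
        ∑ p ∈ Finset.univ.filter
            (fun p : Nat.Partition ℓ =>
              (∀ k ∈ p.parts, k ≤ n) ∧ p.parts ≠ Multiset.replicate ℓ 1),
          PowerSeries.C (R := ℂ) (α p.parts) * FstarM f p.parts (N + 1 - ℓ) := by
  -- Step A: split off the `1^ℓ` term on the left.
  have stepA : ∀ ℓ ∈ Finset.Icc 2 N,
      ∑ p ∈ Finset.univ.filter (fun p : Nat.Partition ℓ => ∀ k ∈ p.parts, k ≤ n),
          PowerSeries.C (R := ℂ) (α p.parts) * (p.parts.map f).prod =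
        (∑ p ∈ Finset.univ.filter
            (fun p : Nat.Partition ℓ =>
              (∀ k ∈ p.parts, k ≤ n) ∧ p.parts ≠ Multiset.replicate ℓ 1),
          PowerSeries.C (R := ℂ) (α p.parts) * (p.parts.map f).prod) +
        PowerSeries.C (R := ℂ) (α (Multiset.replicate ℓ 1)) * f 1 ^ ℓ := by
    intro ℓ hℓ
    rw [← Finset.sum_filter_add_sum_filter_not _
      (fun p : Nat.Partition ℓ => p.parts ≠ Multiset.replicate ℓ 1),
      Finset.filter_filter, Finset.filter_filter]
    congr 1
    have hset : Finset.univ.filter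
        (fun p : Nat.Partition ℓ => (∀ k ∈ p.parts, k ≤ n) ∧
          ¬p.parts ≠ Multiset.replicate ℓ 1) = {onesPartition ℓ} := by
      ext p
      simp only [Finset.mem_filter, Finset.mem_univ, true_and, not_not,
        Finset.mem_singleton]
      constructor
      · rintro ⟨-, hp⟩
        exact Nat.Partition.ext hp
      · rintro rfl
        refine ⟨?_, rfl⟩
        intro k hk
        rw [Multiset.eq_of_mem_replicate hk]
        omega
    rw [hset, Finset.sum_singleton]
    simp [onesPartition, Multiset.map_replicate, Multiset.prod_replicate]
  -- Step B: expand `FstarM` on the right.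
  have stepB : ∀ ℓ ∈ Finset.Icc 2 N, ∀ p ∈ Finset.univ.filter
      (fun p : Nat.Partition ℓ =>
        (∀ k ∈ p.parts, k ≤ n) ∧ p.parts ≠ Multiset.replicate ℓ 1),
      FstarM f p.parts (N + 1 - ℓ) = (p.parts.map f).prod -
        ∑ m ∈ Finset.Icc ℓ N,
          PowerSeries.C (R := ℂ) (PowerSeries.coeff (R := ℂ) (2 * m) (FstarM f p.parts (m - ℓ))) *
            f 1 ^ m := by
    intro ℓ hℓ p _
    rw [FstarM_eq]
    congr 1
    rw [← Finset.Ico_add_one_right_eq_Icc, Finset.sum_Ico_eq_sum_range]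
    apply Finset.sum_congr rfl
    intro k _
    rw [p.parts_sum, Nat.add_sub_cancel_left]
  have stepB' : ∀ ℓ ∈ Finset.Icc 2 N,
      ∑ p ∈ Finset.univ.filter
          (fun p : Nat.Partition ℓ =>
            (∀ k ∈ p.parts, k ≤ n) ∧ p.parts ≠ Multiset.replicate ℓ 1),
        PowerSeries.C (R := ℂ) (α p.parts) * FstarM f p.parts (N + 1 - ℓ) =
      (∑ p ∈ Finset.univ.filter
          (fun p : Nat.Partition ℓ =>
            (∀ k ∈ p.parts, k ≤ n) ∧ p.parts ≠ Multiset.replicate ℓ 1),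
        PowerSeries.C (R := ℂ) (α p.parts) * (p.parts.map f).prod) -
      ∑ p ∈ Finset.univ.filter
          (fun p : Nat.Partition ℓ =>
            (∀ k ∈ p.parts, k ≤ n) ∧ p.parts ≠ Multiset.replicate ℓ 1),
        ∑ m ∈ Finset.Icc ℓ N,
          PowerSeries.C (R := ℂ) (α p.parts) *
            (PowerSeries.C (R := ℂ) (PowerSeries.coeff (R := ℂ) (2 * m) (FstarM f p.parts (m - ℓ))) *
              f 1 ^ m) := by
    intro ℓ hℓ
    rw [← Finset.sum_sub_distrib]
    apply Finset.sum_congr rfl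
    intro p hp
    rw [stepB ℓ hℓ p hp, mul_sub, Finset.mul_sum]
  rw [Finset.sum_congr rfl stepA, Finset.sum_congr rfl stepB',
    Finset.sum_add_distrib, Finset.sum_sub_distrib, sub_eq_add_neg]
  congr 1
  have hswap :
      ∑ ℓ ∈ Finset.Icc 2 N, ∑ p ∈ Finset.univ.filter
          (fun p : Nat.Partition ℓ =>
            (∀ k ∈ p.parts, k ≤ n) ∧ p.parts ≠ Multiset.replicate ℓ 1),
        ∑ m ∈ Finset.Icc ℓ N,
          PowerSeries.C (R := ℂ) (α p.parts) *
            (PowerSeries.C (R := ℂ) (PowerSeries.coeff (R := ℂ) (2 * m) (FstarM f p.parts (m - ℓ))) *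
              f 1 ^ m) =
      ∑ m ∈ Finset.Icc 2 N, ∑ ℓ ∈ Finset.Icc 2 m, ∑ p ∈ Finset.univ.filter
          (fun p : Nat.Partition ℓ =>
            (∀ k ∈ p.parts, k ≤ n) ∧ p.parts ≠ Multiset.replicate ℓ 1),
          PowerSeries.C (R := ℂ) (α p.parts) *
            (PowerSeries.C (R := ℂ) (PowerSeries.coeff (R := ℂ) (2 * m) (FstarM f p.parts (m - ℓ))) *
              f 1 ^ m) := by
    rw [Finset.sum_congr rfl (fun ℓ _ => Finset.sum_comm)]
    exact Finset.sum_comm' (by intro x y; simp only [Finset.mem_Icc]; omega)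
  rw [hswap, ← Finset.sum_neg_distrib]
  apply Finset.sum_congr rfl
  intro m hm
  rw [Finset.sum_congr rfl (fun ℓ _ => Finset.sum_congr rfl (fun p _ => by
      rw [← mul_assoc, ← map_mul])),
    Finset.sum_congr rfl (fun ℓ _ => (Finset.sum_mul _ _ _).symm),
    ← Finset.sum_mul,
    Finset.sum_congr rfl (fun ℓ _ => (map_sum (PowerSeries.C (R := ℂ)) _ _).symm),
    (map_sum (PowerSeries.C (R := ℂ)) _ _).symm, ← neg_mul, ← map_neg, ← hα m hm]
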